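/- Let l₁, …, lₙ and m₁, …, mₙ be two linearly independent families of linear forms in x₁, …, xₙ over k, and let λ₁, …, λₙ and μ₁, …, μₙ be nonzero scalars in k such that Σᵢ λᵢ lᵢ^d = Σᵢ μᵢ mᵢ^d as polynomials. Then there exist a permutation σ of {1,…,n} and nonzero scalars τ₁, …, τₙ ∈ k such that m_{σ(i)} = τᵢ lᵢ and μ_{σ(i)} τᵢ^d = λᵢ for all i; in other words, the diagonalization of a higher degree form is unique up to permutation and scaling of the linear forms. -/

import Mathlib

open MvPolynomial

section Aux

variable {k : Type*} [Field k] {n : ℕ}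

private theorem aux_pd_lin (c : Fin n → k) (b : Fin n) :
    pderiv b (∑ j, C (c j) * X j) = C (c b) := by
  simp [pderiv_X, pderiv_C, Pi.single_apply]

private theorem aux_pd2 (c : Fin n → k) (a b : Fin n) (e : ℕ) :
    pderiv a (pderiv b ((∑ j, C (c j) * X j) ^ (e+2))) =
      C (((e:k)+2) * ((e:k)+1) * c a * c b) * (∑ j, C (c j) * X j) ^ e := by
  rw [pderiv_pow, aux_pd_lin]
  rw [show (e + 2 - 1) = e + 1 from rfl]
  simp only [pderiv_mul, pderiv_pow, pderiv_C, Derivation.map_natCast, aux_pd_lin]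
  rw [show (e + 1 - 1) = e from rfl]
  rw [← map_natCast (C : k →+* MvPolynomial (Fin n) k) (e+2),
      ← map_natCast (C : k →+* MvPolynomial (Fin n) k) (e+1)]
  rw [show C (((e:k)+2) * ((e:k)+1) * c a * c b)
      = C ((e:k)+2) * C ((e:k)+1) * C (c a) * C (c b) by simp [C_mul]]
  push_cast
  ring

private theorem aux_pdXpow (a b j : Fin n) (e : ℕ) (hab : a ≠ b) :
    pderiv a (pderiv b ((X j : MvPolynomial (Fin n) k) ^ e)) = 0 := by
  rcases eq_or_ne b j with rfl | h
  · simp [pderiv_pow, pderiv_X, Pi.single_apply, hab]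
  · simp [pderiv_pow, pderiv_X, Pi.single_apply, h]

private theorem aux_aeval_lin (A : Fin n → Fin n → k) (c : Fin n → k) :
    aeval (fun j => ∑ t, C (A j t) * X t) (∑ j, C (c j) * X j)
      = ∑ t, C (∑ j, c j * A j t) * X t := by
  rw [map_sum]
  have h : ∀ j : Fin n, (aeval (fun j => ∑ t, C (A j t) * X t)) (C (c j) * X j)
      = ∑ t, C (c j * A j t) * X t := by
    intro j
    rw [map_mul, aeval_C, aeval_X, algebraMap_eq, Finset.mul_sum]
    simp [C_mul, mul_assoc]
  simp only [h]
  rw [Finset.sum_comm]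
  refine Finset.sum_congr rfl fun t _ => ?_
  rw [map_sum, Finset.sum_mul]

private theorem aux_coeff_lin (c : Fin n → k) (t : Fin n) :
    coeff (Finsupp.single t 1) (∑ j, C (c j) * X j) = c t := by
  simp [coeff_sum, coeff_C_mul, coeff_X', Finsupp.single_left_inj]

private theorem aux_lin_ne_zero (c : Fin n → k) (hc : c ≠ 0) :
    (∑ j, C (c j) * X j) ≠ 0 := by
  intro h
  apply hc
  funext t
  have h2 := aux_coeff_lin c t
  rw [h] at h2
  simpa using h2.symm

private theorem aux_sum_ite_X (i : Fin n) :
    (∑ t, C (if i = t then (1:k) else 0) * X t) = X i := by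
  rw [Finset.sum_eq_single i]
  · simp
  · intro t _ ht
    simp [Ne.symm ht]
  · simp

private theorem aux_coeff_X_pow (i j : Fin n) {d : ℕ} (hd0 : d ≠ 0) :
    coeff (Finsupp.single j d) ((X i : MvPolynomial (Fin n) k) ^ d)
      = if i = j then 1 else 0 := by
  rw [X_pow_eq_monomial, coeff_monomial]
  by_cases h : i = j
  · subst h; simp
  · rw [if_neg h, if_neg]
    intro hc
    exact h ((Finsupp.single_left_inj hd0).mp hc)

end Aux

/-- Let `l₁, …, lₙ` and `m₁, …, mₙ` be two linearly independent families of
linear forms (given by their coefficient vectors) in `x₁, …, xₙ` over `k`, and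
`λ₁, …, λₙ, μ₁, …, μₙ` nonzero scalars with `Σᵢ λᵢ lᵢ^d = Σᵢ μᵢ mᵢ^d` as polynomials. Then
there are a permutation `σ` and nonzero scalars `τᵢ` with `m_{σ(i)} = τᵢ lᵢ` and
`μ_{σ(i)} τᵢ^d = λᵢ` for all `i`: the diagonalization of a higher degree form is unique
up to permutation and scaling. -/
theorem stmt_10 {k : Type*} [Field k] {n d : ℕ} (hd : 3 ≤ d)
    (hchar : CharZero k ∨ ∃ p : ℕ, CharP k p ∧ d < p)
    (l m : Fin n → (Fin n → k))
    (hl : LinearIndependent k l) (hm : LinearIndependent k m)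
    (lam mu : Fin n → k) (hlam : ∀ i, lam i ≠ 0) (hmu : ∀ i, mu i ≠ 0)
    (heq : ∑ i, C (lam i) * (∑ j, C (l i j) * X j) ^ d
         = ∑ i, C (mu i) * (∑ j, C (m i j) * X j) ^ d) :
    ∃ (σ : Equiv.Perm (Fin n)) (τ : Fin n → k), (∀ i, τ i ≠ 0) ∧
      (∀ i, m (σ i) = τ i • l i) ∧ (∀ i, mu (σ i) * τ i ^ d = lam i) := by
  classical
  -- cast facts
  have hcast : ∀ e : ℕ, 0 < e → e ≤ d → ((e : k) ≠ 0) := by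
    intro e he hle
    rcases hchar with h | ⟨p, hp, hdp⟩
    · exact Nat.cast_ne_zero.mpr he.ne'
    · haveI := hp
      rw [Ne, CharP.cast_eq_zero_iff k p]
      intro hdvd
      have := Nat.le_of_dvd he hdvd
      omega
  -- matrices
  set L : Matrix (Fin n) (Fin n) k := Matrix.of l with hLdef
  have hLunit : IsUnit L := Matrix.linearIndependent_rows_iff_isUnit.mp hl
  have hLdet : IsUnit L.det := (Matrix.isUnit_iff_isUnit_det L).mp hLunit
  set A : Matrix (Fin n) (Fin n) k := L⁻¹ with hAdef
  have hLA : L * A = 1 := Matrix.mul_nonsing_inv L hLdet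
  have hAL : A * L = 1 := Matrix.nonsing_inv_mul L hLdet
  have hAunit : IsUnit A := Matrix.isUnit_nonsing_inv_iff.mpr hLunit
  set m' : Fin n → Fin n → k := fun i t => ∑ u, m i u * A u t with hm'def
  have hM'eq : (Matrix.of m' : Matrix (Fin n) (Fin n) k) = Matrix.of m * A := by
    ext i t
    simp [Matrix.mul_apply, hm'def]
  have hMunit : IsUnit (Matrix.of m : Matrix (Fin n) (Fin n) k) :=
    Matrix.linearIndependent_rows_iff_isUnit.mp hm
  have hM'unit : IsUnit (Matrix.of m' : Matrix (Fin n) (Fin n) k) := by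
    rw [hM'eq]; exact hMunit.mul hAunit
  have hm' : LinearIndependent k m' :=
    Matrix.linearIndependent_rows_iff_isUnit.mpr hM'unit
  have hm'ne : ∀ i, m' i ≠ 0 := fun i => hm'.ne_zero i
  -- reduce the equation
  have hLA' : ∀ i t, (∑ j, l i j * A j t) = if i = t then (1:k) else 0 := by
    intro i t
    have h := congrFun (congrFun hLA i) t
    simpa [Matrix.mul_apply, Matrix.one_apply, hLdef] using h
  have hXi : ∀ i, (aeval (fun j => ∑ t, C (A j t) * X t))
      (∑ j, C (l i j) * X j) = (X i : MvPolynomial (Fin n) k) := by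
    intro i
    rw [aux_aeval_lin A (l i)]
    simp only [hLA']
    exact aux_sum_ite_X i
  have hMi : ∀ i, (aeval (fun j => ∑ t, C (A j t) * X t))
      (∑ j, C (m i j) * X j) = ∑ t, C (m' i t) * X t := by
    intro i
    exact aux_aeval_lin A (m i)
  have heq' : (∑ i, C (lam i) * (X i : MvPolynomial (Fin n) k) ^ d)
      = ∑ i, C (mu i) * (∑ t, C (m' i t) * X t) ^ d := by
    have h := congrArg (aeval (fun j => ∑ t, C (A j t) * X t) :
      MvPolynomial (Fin n) k →ₐ[k] MvPolynomial (Fin n) k) heq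
    rw [map_sum, map_sum] at h
    calc (∑ i, C (lam i) * (X i : MvPolynomial (Fin n) k) ^ d)
        = ∑ i, (aeval (fun j => ∑ t, C (A j t) * X t))
            (C (lam i) * (∑ j, C (l i j) * X j) ^ d) := by
          refine Finset.sum_congr rfl fun i _ => ?_
          rw [map_mul, map_pow, aeval_C, algebraMap_eq, hXi]
      _ = ∑ i, (aeval (fun j => ∑ t, C (A j t) * X t))
            (C (mu i) * (∑ j, C (m i j) * X j) ^ d) := h
      _ = ∑ i, C (mu i) * (∑ t, C (m' i t) * X t) ^ d := by
          refine Finset.sum_congr rfl fun i _ => ?_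
          rw [map_mul, map_pow, aeval_C, algebraMap_eq, hMi]
  -- the matrix B'
  set B' : Matrix (Fin n) (Fin n) k := fun j i => (lam j)⁻¹ * (mu i * m' i j) with hB'def
  have hB'fact : B' = Matrix.diagonal (fun j => (lam j)⁻¹)
      * ((Matrix.of m').transpose * Matrix.diagonal mu) := by
    ext j i
    rw [Matrix.diagonal_mul, Matrix.mul_diagonal, Matrix.transpose_apply, Matrix.of_apply]
    show (lam j)⁻¹ * (mu i * m' i j) = _
    ring
  have hB'det : IsUnit B'.det := by
    rw [hB'fact, Matrix.det_mul, Matrix.det_mul, Matrix.det_diagonal,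
      Matrix.det_diagonal, Matrix.det_transpose]
    refine (IsUnit.mul ?_ (IsUnit.mul ?_ ?_))
    · rw [isUnit_iff_ne_zero]
      exact Finset.prod_ne_zero_iff.mpr fun j _ => inv_ne_zero (hlam j)
    · exact (Matrix.isUnit_iff_isUnit_det _).mp hM'unit
    · rw [isUnit_iff_ne_zero]
      exact Finset.prod_ne_zero_iff.mpr fun j _ => hmu j
  have hBinvB : B'⁻¹ * B' = 1 := Matrix.nonsing_inv_mul B' hB'det
  -- derivative equation
  set P : Fin n → MvPolynomial (Fin n) k := fun i => (∑ t, C (m' i t) * X t) ^ (d-1)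
    with hPdef
  have hD : ∀ j, C (lam j) * (X j : MvPolynomial (Fin n) k) ^ (d-1)
      = ∑ i, C (mu i * m' i j) * P i := by
    intro j
    have h := congrArg (pderiv j) heq'
    rw [map_sum, map_sum] at h
    have hl' : ∀ i, pderiv j (C (lam i) * (X i : MvPolynomial (Fin n) k) ^ d)
        = if i = j then C ((d : k)) * (C (lam i) * X i ^ (d-1)) else 0 := by
      intro i
      rw [pderiv_C_mul, pderiv_pow, pderiv_X, Pi.single_apply]
      by_cases hij : i = j
      · subst hij
        rw [← map_natCast (C : k →+* MvPolynomial (Fin n) k) d]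
        simp only [if_pos rfl]
        simp only [if_true, eq_self_iff_true, mul_one]
        ring
      · simp [hij]
    have hr' : ∀ i, pderiv j (C (mu i) * (∑ t, C (m' i t) * X t) ^ d)
        = C ((d : k)) * (C (mu i * m' i j) * P i) := by
      intro i
      rw [pderiv_C_mul, pderiv_pow, aux_pd_lin, hPdef]
      rw [← map_natCast (C : k →+* MvPolynomial (Fin n) k) d]
      simp only [C_mul]
      ring
    simp only [hl', hr'] at h
    rw [Finset.sum_ite_eq' Finset.univ j
      (fun i => C ((d : k)) * (C (lam i) * X i ^ (d-1)))] at h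
    simp only [Finset.mem_univ, if_pos] at h
    rw [← Finset.mul_sum] at h
    have hCd : (C ((d : k)) : MvPolynomial (Fin n) k) ≠ 0 := by
      rw [Ne, C_eq_zero]
      exact hcast d (by omega) le_rfl
    exact mul_left_cancel₀ hCd h
  have hXP : ∀ j, (X j : MvPolynomial (Fin n) k) ^ (d-1) = ∑ i, C (B' j i) * P i := by
    intro j
    have h := congrArg (fun q => C ((lam j)⁻¹) * q) (hD j)
    rw [← mul_assoc, ← C_mul, inv_mul_cancel₀ (hlam j), C_1, one_mul, Finset.mul_sum] at h
    rw [h]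
    refine Finset.sum_congr rfl fun i _ => ?_
    rw [← mul_assoc, ← C_mul, hB'def]
  have hP : ∀ i, P i = ∑ j, C (B'⁻¹ i j) * (X j : MvPolynomial (Fin n) k) ^ (d-1) := by
    intro i
    have h1 : ∀ i', (∑ j, B'⁻¹ i j * B' j i') = if i = i' then (1:k) else 0 := by
      intro i'
      have h := congrFun (congrFun hBinvB i) i'
      simpa [Matrix.mul_apply, Matrix.one_apply] using h
    calc P i = ∑ i', C (if i = i' then (1:k) else 0) * P i' := by
          rw [Finset.sum_eq_single i]
          · simp
          · intro t _ ht; simp [Ne.symm ht]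
          · simp
      _ = ∑ i', C (∑ j, B'⁻¹ i j * B' j i') * P i' := by simp only [h1]
      _ = ∑ j, ∑ i', C (B'⁻¹ i j * B' j i') * P i' := by
          rw [Finset.sum_comm]
          refine Finset.sum_congr rfl fun i' _ => ?_
          rw [map_sum, Finset.sum_mul]
      _ = ∑ j, C (B'⁻¹ i j) * (X j : MvPolynomial (Fin n) k) ^ (d-1) := by
          refine Finset.sum_congr rfl fun j _ => ?_
          rw [hXP j, Finset.mul_sum]
          refine Finset.sum_congr rfl fun i' _ => ?_
          simp only [C_mul]
          ring
  -- cross products vanish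
  have hcross : ∀ i a b, a ≠ b → m' i a * m' i b = 0 := by
    intro i a b hab
    set e : ℕ := d - 3 with hedef
    have hde : d - 1 = e + 2 := by omega
    have h := congrArg (fun q => pderiv a (pderiv b q)) (hP i)
    rw [map_sum, map_sum] at h
    have hz : ∀ j, pderiv a (pderiv b (C (B'⁻¹ i j)
        * (X j : MvPolynomial (Fin n) k) ^ (d-1))) = 0 := by
      intro j
      rw [pderiv_C_mul, pderiv_C_mul, aux_pdXpow a b j (d-1) hab, mul_zero]
    simp only [hz, Finset.sum_const_zero] at h
    rw [hPdef] at h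
    simp only [hde] at h
    rw [aux_pd2 (m' i) a b e] at h
    have hne1 : ((e:k)+2) * ((e:k)+1) * m' i a * m' i b = 0 := by
      rcases mul_eq_zero.mp h with h' | h'
      · exact (C_eq_zero).mp h'
      · exact absurd h' (pow_ne_zero e (aux_lin_ne_zero (m' i) (hm'ne i)))
    have he2 : ((e:k)+2) ≠ 0 := by
      have : ((e:k)+2) = ((e+2 : ℕ) : k) := by push_cast; ring
      rw [this]
      exact hcast (e+2) (by omega) (by omega)
    have he1 : ((e:k)+1) ≠ 0 := by
      have : ((e:k)+1) = ((e+1 : ℕ) : k) := by push_cast; ring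
      rw [this]
      exact hcast (e+1) (by omega) (by omega)
    have := mul_eq_zero.mp hne1
    rcases this with h' | h'
    · rcases mul_eq_zero.mp h' with h'' | h''
      · exact absurd (mul_eq_zero.mp h'') (by push_neg; exact ⟨he2, he1⟩)
      · rcases eq_or_ne (m' i b) 0 with hb0 | hb0
        · rw [hb0, mul_zero]
        · rw [h'', zero_mul]
    · rw [h', mul_zero]
  -- the support function
  have hex : ∀ i, ∃ t, m' i t ≠ 0 := by
    intro i
    by_contra hcon
    push_neg at hcon
    exact hm'ne i (funext hcon)
  set bf : Fin n → Fin n := fun i => (hex i).choose with hbfdef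
  have hbf : ∀ i, m' i (bf i) ≠ 0 := fun i => (hex i).choose_spec
  have hzero : ∀ i t, t ≠ bf i → m' i t = 0 := by
    intro i t ht
    have := hcross i t (bf i) ht
    rcases mul_eq_zero.mp this with h' | h'
    · exact h'
    · exact absurd h' (hbf i)
  have hbinj : Function.Injective bf := by
    intro i i' hii'
    by_contra hne
    have hli := Fintype.linearIndependent_iff.mp hm'
    set g : Fin n → k := fun x => if x = i then m' i' (bf i)
      else if x = i' then -(m' i (bf i)) else 0 with hgdef
    have hsum : ∑ x, g x • m' x = 0 := by
      have hsub : ∑ x, g x • m' x = ∑ x ∈ ({i, i'} : Finset (Fin n)), g x • m' x := by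
        refine (Finset.sum_subset (Finset.subset_univ _) ?_).symm
        intro x _ hx
        simp only [Finset.mem_insert, Finset.mem_singleton] at hx
        push_neg at hx
        rw [hgdef]
        simp [hx.1, hx.2]
      rw [hsub, Finset.sum_pair hne]
      have hgi : g i = m' i' (bf i) := by simp [hgdef]
      have hgi' : g i' = -(m' i (bf i)) := by simp [hgdef, Ne.symm hne]
      rw [hgi, hgi']
      funext t
      rcases eq_or_ne t (bf i) with rfl | ht
      · simp only [Pi.add_apply, Pi.smul_apply, smul_eq_mul, Pi.zero_apply]
        ring
      · have h1 : m' i t = 0 := hzero i t ht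
        have h2 : m' i' t = 0 := hzero i' t (by rw [← hii']; exact ht)
        simp [h1, h2]
    have := hli g hsum i
    rw [hgdef] at this
    simp only [if_pos rfl] at this
    exact hbf i' (by rw [hii'] at this; exact this)
  have hbbij : Function.Bijective bf := (Finite.injective_iff_bijective).mp hbinj
  set σ' : Equiv.Perm (Fin n) := Equiv.ofBijective bf hbbij with hσ'def
  set σ : Equiv.Perm (Fin n) := σ'.symm with hσdef
  have hbfσ : ∀ i, bf (σ i) = i := by
    intro i
    have : σ' (σ i) = i := Equiv.apply_symm_apply σ' i
    exact this
  set τ : Fin n → k := fun i => m' (σ i) i with hτdef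
  have hτne : ∀ i, τ i ≠ 0 := by
    intro i
    have := hbf (σ i)
    rw [hbfσ i] at this
    exact this
  have hm'diag : ∀ i t, m' (σ i) t = if t = i then τ i else 0 := by
    intro i t
    rcases eq_or_ne t i with rfl | ht
    · simp [hτdef]
    · rw [if_neg ht]
      exact hzero (σ i) t (by rw [hbfσ i]; exact ht)
  -- recover m from m'
  have hback : ∀ x t, (∑ s, m' x s * l s t) = m x t := by
    intro x t
    have hALapp : ∀ u, (∑ s, A u s * l s t) = if u = t then (1:k) else 0 := by
      intro u
      have h := congrFun (congrFun hAL u) t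
      simpa [Matrix.mul_apply, Matrix.one_apply, hLdef] using h
    calc ∑ s, m' x s * l s t = ∑ s, ∑ u, m x u * A u s * l s t := by
          refine Finset.sum_congr rfl fun s _ => ?_
          rw [hm'def, Finset.sum_mul]
      _ = ∑ u, m x u * (∑ s, A u s * l s t) := by
          rw [Finset.sum_comm]
          refine Finset.sum_congr rfl fun u _ => ?_
          rw [Finset.mul_sum]
          refine Finset.sum_congr rfl fun s _ => ?_
          ring
      _ = m x t := by
          simp only [hALapp, mul_ite, mul_one, mul_zero]
          rw [Finset.sum_ite_eq' Finset.univ t (fun u => m x u)]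
          simp
  have hmσ : ∀ i, m (σ i) = τ i • l i := by
    intro i
    funext t
    have hs : (∑ s, m' (σ i) s * l s t) = m' (σ i) i * l i t :=
      Finset.sum_eq_single i (fun s _ hs => by rw [hm'diag i s, if_neg hs, zero_mul])
        (by simp)
    rw [Pi.smul_apply, smul_eq_mul, ← hback (σ i) t, hs, hm'diag i i, if_pos rfl]
  -- final scalar identity
  have hcollapse : ∀ i, (∑ t, C (m' i t) * X t : MvPolynomial (Fin n) k)
      = C (m' i (bf i)) * X (bf i) := by
    intro i
    exact Finset.sum_eq_single (bf i)
      (fun t _ ht => by rw [hzero i t ht, C_0, zero_mul]) (by simp)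
  have hμτ : ∀ i, mu (σ i) * τ i ^ d = lam i := by
    intro i
    have hdne : d ≠ 0 := by omega
    have h := congrArg (coeff (Finsupp.single i d)) heq'
    rw [coeff_sum, coeff_sum] at h
    have hL3 : ∀ x, coeff (Finsupp.single i d) (C (lam x) * (X x : MvPolynomial (Fin n) k) ^ d)
        = if x = i then lam x else 0 := by
      intro x
      rw [coeff_C_mul, aux_coeff_X_pow x i hdne]
      split_ifs <;> simp
    have hR3 : ∀ x, coeff (Finsupp.single i d) (C (mu x) * (∑ t, C (m' x t) * X t) ^ d)
        = if x = σ i then mu x * m' x (bf x) ^ d else 0 := by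
      intro x
      rw [hcollapse x, mul_pow, ← C_pow, ← mul_assoc, ← C_mul, coeff_C_mul,
        aux_coeff_X_pow (bf x) i hdne]
      have hcond : (bf x = i) ↔ (x = σ i) := by
        constructor
        · intro hbi
          have := hbinj (a₁ := x) (a₂ := σ i) (by rw [hbfσ i]; exact hbi)
          exact this
        · intro hx
          rw [hx, hbfσ i]
      by_cases hxσ : x = σ i
      · rw [if_pos (hcond.mpr hxσ), if_pos hxσ, mul_one]
      · rw [if_neg (fun hc => hxσ (hcond.mp hc)), if_neg hxσ, mul_zero]
    simp only [hL3, hR3] at h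
    rw [Finset.sum_ite_eq' Finset.univ i (fun x => lam x),
        Finset.sum_ite_eq' Finset.univ (σ i) (fun x => mu x * m' x (bf x) ^ d)] at h
    simp only [Finset.mem_univ, if_pos] at h
    have hτeq : m' (σ i) (bf (σ i)) = τ i := by rw [hbfσ i, hτdef]
    rw [hτeq] at h
    exact h.symm
  exact ⟨σ, τ, hτne, hmσ, hμτ⟩
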